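/- Let π be a chain on a finite set V with direct comparisons dir_π, and let ω be a strict partial order on V. Define the cycle-free part cf(π,ω) as the set of pairs (i,j) in the transitive closure of π ∪ ω such that (j,i) is not in the transitive closure of π ∪ ω. Then the transitive closure of ω ∪ cf(π,ω) is a strict partial order on V. -/

import Mathlib

open Classical

variable {V : Type*}

/-- Transitive closure of a set of pairs (a relation). -/
def tc (R : Set (V × V)) : Set (V × V) :=
  {p | Relation.TransGen (fun a b => (a, b) ∈ R) p.1 p.2}

/-- A strict partial order: transitive and irreflexive. -/
def IsSPO (R : Set (V × V)) : Prop :=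
  (∀ a b c, (a, b) ∈ R → (b, c) ∈ R → (a, c) ∈ R) ∧ ∀ a, (a, a) ∉ R

/-- The chain determined by a duplicate-free list `l` (earlier = better):
`(i,j)` is in the chain iff `i` occurs strictly before `j` in `l`. -/
def chainSet (l : List V) : Set (V × V) := {p | [p.1, p.2].Sublist l}

/-- The direct comparisons of the chain `l`: pairs of consecutive elements. -/
def dirSet (l : List V) : Set (V × V) := {p | p ∈ l.zip l.tail}

/-- Cycle-free part of `(π ∪ ω)⁺`. -/
def cf (l : List V) (w : Set (V × V)) : Set (V × V) :=
  {p | p ∈ tc (chainSet l ∪ w) ∧ (p.2, p.1) ∉ tc (chainSet l ∪ w)}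

/-- Cyclic part of `π` with respect to `ω`: direct comparisons involved in a cycle. -/
def cyc (l : List V) (w : Set (V × V)) : Set (V × V) :=
  {p | p ∈ dirSet l ∧ (p.2, p.1) ∈ tc (chainSet l ∪ w)}

/-- A total preorder on a set `S` of comparisons. -/
def IsTotalPreorderOn (le : V × V → V × V → Prop) (S : Set (V × V)) : Prop :=
  (∀ a ∈ S, ∀ b ∈ S, ∀ c ∈ S, le a b → le b c → le a c) ∧
    (∀ a ∈ S, ∀ b ∈ S, le a b ∨ le b a)

/-- A strict linear order on a set `S` of comparisons. -/
def IsLinearOn (lt : V × V → V × V → Prop) (S : Set (V × V)) : Prop :=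
  (∀ a ∈ S, ∀ b ∈ S, ∀ c ∈ S, lt a b → lt b c → lt a c) ∧
    (∀ a ∈ S, ∀ b ∈ S, a ≠ b → lt a b ∨ lt b a) ∧ (∀ a ∈ S, ¬ lt a a)

/-- The `≤`-minimal (best) elements of `S`. -/
def minset (le : V × V → V × V → Prop) (S : Set (V × V)) : Set (V × V) :=
  {c | c ∈ S ∧ ∀ d ∈ S, le c d}

/-- Remaining elements of `S` after peeling off the first `n` levels. -/
def rem (le : V × V → V × V → Prop) (S : Set (V × V)) : ℕ → Set (V × V)
  | 0 => S
  | n + 1 => rem le S n \ minset le (rem le S n)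

/-- The `i`-th level (for `i ≥ 1`) of `S` under the total preorder `le`. -/
def level (le : V × V → V × V → Prop) (S : Set (V × V)) (i : ℕ) : Set (V × V) :=
  minset le (rem le S (i - 1))

/-- The addition operator: `addSeq le l w 0 = (ω ∪ cf(π,ω))⁺`, and step `i+1`
tries to add level `i+1` of `dir_π` intersected with `cyc(π,ω)`. -/
noncomputable def addSeq (le : V × V → V × V → Prop) (l : List V) (w : Set (V × V)) :
    ℕ → Set (V × V)
  | 0 => tc (w ∪ cf l w)
  | i + 1 =>
    if IsSPO (tc (addSeq le l w i ∪ (minset le (rem le (dirSet l) i) ∩ cyc l w))) then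
      tc (addSeq le l w i ∪ (minset le (rem le (dirSet l) i) ∩ cyc l w))
    else addSeq le l w i

/-- The fixed point of the addition operator. -/
noncomputable def addStar (le : V × V → V × V → Prop) (l : List V) (w : Set (V × V)) :
    Set (V × V) :=
  ⋃ i, addSeq le l w i

/-- The set of `π`-completions of `ω`. -/
def completions (l : List V) (w : Set (V × V)) : Set (Set (V × V)) :=
  {R | ∃ δ, δ ⊆ dirSet l ∧ R = tc (w ∪ δ) ∧ IsSPO R}

/-- `ω₁` and `ω₂` are coordinated with respect to the chain `l`. -/
def Coordinated (l : List V) (w1 w2 : Set (V × V)) : Prop :=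
  ∀ δ ⊆ cyc l w1,
    (∀ p ∈ δ, p ∉ tc (w1 ∪ w2) ∧ (p.2, p.1) ∉ tc (w1 ∪ w2)) →
    IsSPO (tc (w1 ∪ δ)) → IsSPO (tc (tc (w1 ∪ w2) ∪ δ))

lemma transGen_union_cases {α : Type*} {R S : α → α → Prop} {a b : α}
    (h : Relation.TransGen (fun x y => R x y ∨ S x y) a b) :
    Relation.TransGen R a b ∨
      ∃ x y, S x y ∧ Relation.ReflTransGen (fun x y => R x y ∨ S x y) a x ∧
        Relation.ReflTransGen (fun x y => R x y ∨ S x y) y b := by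
  induction h with
  | single h =>
    rcases h with h | h
    · exact Or.inl (Relation.TransGen.single h)
    · exact Or.inr ⟨_, _, h, Relation.ReflTransGen.refl, Relation.ReflTransGen.refl⟩
  | tail hab hbc ih =>
    rcases hbc with h | h
    · rcases ih with ih | ⟨x, y, hs, h1, h2⟩
      · exact Or.inl (ih.tail h)
      · exact Or.inr ⟨x, y, hs, h1, h2.tail (Or.inl h)⟩
    · exact Or.inr ⟨_, _, h, (Relation.TransGen.to_reflTransGen hab), Relation.ReflTransGen.refl⟩

theorem stmt3 {V : Type*} [Fintype V] (l : List V) (hl : l.Nodup)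
    (w : Set (V × V)) (hw : IsSPO w) :
    IsSPO (tc (w ∪ cf l w)) := by
  set T := tc (chainSet l ∪ w) with hT
  have hTtrans : ∀ a b c : V, (a, b) ∈ T → (b, c) ∈ T → (a, c) ∈ T := by
    intro a b c h1 h2; exact h1.trans h2
  -- tc (w ∪ cf l w) ⊆ T
  have hsub : tc (w ∪ cf l w) ⊆ T := by
    intro p hp
    obtain ⟨a, b⟩ := p
    simp only [tc, Set.mem_setOf_eq] at hp ⊢
    induction hp with
    | single h =>
      rcases h with h | h
      · exact Relation.TransGen.single (Or.inr h)
      · exact h.1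
    | tail _ h ih =>
      rcases h with h | h
      · exact ih.tail (Or.inr h)
      · exact ih.trans h.1
  constructor
  · intro a b c h1 h2; exact h1.trans h2
  · intro a ha
    simp only [tc, Set.mem_setOf_eq] at ha
    have ha' : Relation.TransGen
        (fun x y => (x, y) ∈ w ∨ (x, y) ∈ cf l w) a a := by
      exact Relation.TransGen.mono (fun x y h => by simpa [Set.mem_union] using h) _ _ ha
    rcases transGen_union_cases ha' with h | ⟨x, y, hs, h1, h2⟩
    · -- cycle entirely in w
      have : (a, a) ∈ w := by
        have hw2 : Transitive (fun x y : V => (x, y) ∈ w) := fun x y z => hw.1 x y z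
        rwa [@Relation.transGen_eq_self _ _ ⟨fun x y z => hw.1 x y z⟩] at h
      exact hw.2 a this
    · -- cf step (x,y); path from y to x via a
      have hyx : Relation.ReflTransGen
          (fun x y => (x, y) ∈ w ∨ (x, y) ∈ cf l w) y x := h2.trans h1
      rcases (Relation.reflTransGen_iff_eq_or_transGen.mp hyx) with heq | htg
      · -- y = x, so (x,x) ∈ cf : contradiction
        subst heq
        exact hs.2 (hs.1)
      · have : (y, x) ∈ tc (w ∪ cf l w) := by
          simp only [tc, Set.mem_setOf_eq]
          exact Relation.TransGen.mono (fun u v h => by simpa [Set.mem_union] using h) _ _ htg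
        exact hs.2 (hsub this)
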